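/- Let Y, U ∈ V be orthonormal (⟨Y,Y⟩ = ⟨U,U⟩ = 1, ⟨Y,U⟩ = 0), and let W ∈ V satisfy ⟨W,Y⟩ = 0 (as holds for W = R(U,Y)Y by the symmetries of a Riemannian curvature tensor). Set A = ⟨W,X⟩ and B = ⟨W,U⟩. Then the flag curvature quotient satisfies g_Y(W,U) / (g_Y(Y,Y)·g_Y(U,U) − g_Y(Y,U)²) = (1 − ⟨Y,X⟩)²·{ B(1 − ⟨Y,X⟩)(1 − 2⟨Y,X⟩) + 3A⟨U,X⟩ } / { (1 − ⟨Y,X⟩)(1 − 2⟨Y,X⟩) + 2⟨U,X⟩² }. -/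

import Mathlib

open scoped RealInnerProductSpace

/-- The Matsumoto metric `F(y) = ⟨y,y⟩ / (√⟨y,y⟩ − ⟨X,y⟩)` associated to the
vector `X` of an inner product space. -/
noncomputable def matsumotoF {V : Type*} [NormedAddCommGroup V] [InnerProductSpace ℝ V]
    (X y : V) : ℝ :=
  ⟪y, y⟫ / (Real.sqrt ⟪y, y⟫ - ⟪X, y⟫)

/-- The fundamental tensor of the Matsumoto metric:
`g_Y(U,W) = (1/2)·∂²/∂s∂t [F²(Y + sU + tW)]` at `s = t = 0`. -/
noncomputable def matsumotoG {V : Type*} [NormedAddCommGroup V] [InnerProductSpace ℝ V]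
    (X Y U W : V) : ℝ :=
  (1 / 2) * deriv (fun s : ℝ =>
    deriv (fun t : ℝ => (matsumotoF X (Y + s • U + t • W)) ^ 2) 0) 0

section Aux

variable {V : Type*} [NormedAddCommGroup V] [InnerProductSpace ℝ V]

lemma matsumoto_sqrt_inner_self (y : V) : Real.sqrt ⟪y, y⟫ = ‖y‖ := by
  rw [real_inner_self_eq_norm_sq, Real.sqrt_sq (norm_nonneg y)]

lemma matsumoto_inner_expand (c Q : V) (t : ℝ) :
    ⟪c + t • Q, c + t • Q⟫ = ⟪c, c⟫ + 2 * ⟪c, Q⟫ * t + ⟪Q, Q⟫ * t ^ 2 := by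
  rw [inner_add_add_self]
  simp [inner_add_add_self, real_inner_smul_left, real_inner_smul_right,
    real_inner_comm Q c, norm_smul, mul_pow, sq_abs]
  ring

lemma matsumoto_hasDerivAt_inner_t (X c Q : V) (hX : ‖X‖ < 1 / 2) (t : ℝ)
    (hy : c + t • Q ≠ 0) :
    HasDerivAt (fun t : ℝ => (matsumotoF X (c + t • Q)) ^ 2)
      (2 * ⟪c + t • Q, c + t • Q⟫ *
        (⟪c + t • Q, Q⟫ * (Real.sqrt ⟪c + t • Q, c + t • Q⟫ - 2 * ⟪X, c + t • Q⟫)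
          + ⟪c + t • Q, c + t • Q⟫ * ⟪X, Q⟫) /
        (Real.sqrt ⟪c + t • Q, c + t • Q⟫ - ⟪X, c + t • Q⟫) ^ 3) t := by
  set cc := (⟪c, c⟫ : ℝ)
  set cq := (⟪c, Q⟫ : ℝ)
  set qq := (⟪Q, Q⟫ : ℝ)
  set xc := (⟪X, c⟫ : ℝ)
  set xq := (⟪X, Q⟫ : ℝ)
  have hiy : ∀ s : ℝ, (⟪c + s • Q, c + s • Q⟫ : ℝ) = cc + 2 * cq * s + qq * s ^ 2 :=
    fun s => matsumoto_inner_expand c Q s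
  have hxy : ∀ s : ℝ, (⟪X, c + s • Q⟫ : ℝ) = xc + xq * s := by
    intro s
    simp [inner_add_right, real_inner_smul_right, xc, xq]
    ring
  have hcy : (⟪c + t • Q, Q⟫ : ℝ) = cq + qq * t := by
    simp [inner_add_left, real_inner_smul_left, cq, qq, real_inner_comm Q c]
    ring
  have hφpos : 0 < cc + 2 * cq * t + qq * t ^ 2 := by
    rw [← hiy t, real_inner_self_eq_norm_sq]
    exact pow_pos (norm_pos_iff.mpr hy) 2
  have hDpos : 0 < Real.sqrt (cc + 2 * cq * t + qq * t ^ 2) - (xc + xq * t) := by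
    have h1 := real_inner_le_norm X (c + t • Q)
    have h2 : 0 < ‖c + t • Q‖ := norm_pos_iff.mpr hy
    have h3 : 0 < Real.sqrt ⟪c + t • Q, c + t • Q⟫ - ⟪X, c + t • Q⟫ := by
      rw [matsumoto_sqrt_inner_self]
      nlinarith [norm_nonneg X]
    rwa [hiy t, hxy t] at h3
  have hfun : (fun s : ℝ => (matsumotoF X (c + s • Q)) ^ 2)
      = fun s => (cc + 2 * cq * s + qq * s ^ 2) ^ 2
          / (Real.sqrt (cc + 2 * cq * s + qq * s ^ 2) - (xc + xq * s)) ^ 2 := by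
    funext s
    simp only [matsumotoF, div_pow, hiy s, hxy s]
  rw [hfun, hiy t, hxy t, hcy]
  have hφ' : HasDerivAt (fun s : ℝ => cc + 2 * cq * s + qq * s ^ 2)
      (2 * cq + qq * (2 * t)) t := by
    have h2 : HasDerivAt (fun s : ℝ => 2 * cq * s) (2 * cq) t := by
      simpa using (hasDerivAt_id t).const_mul (2 * cq)
    have h3 : HasDerivAt (fun s : ℝ => qq * s ^ 2) (qq * (2 * t)) t := by
      simpa using (hasDerivAt_pow 2 t).const_mul qq
    simpa using ((hasDerivAt_const t cc).fun_add h2).fun_add h3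
  have hψ' : HasDerivAt (fun s : ℝ => xc + xq * s) xq t := by
    simpa using (hasDerivAt_const t xc).fun_add ((hasDerivAt_id t).const_mul xq)
  have hr : HasDerivAt (fun s : ℝ => Real.sqrt (cc + 2 * cq * s + qq * s ^ 2))
      ((2 * cq + qq * (2 * t)) / (2 * Real.sqrt (cc + 2 * cq * t + qq * t ^ 2))) t :=
    hφ'.sqrt (ne_of_gt hφpos)
  have hD := ((hr.fun_sub hψ').fun_pow 2)
  have hN := hφ'.fun_pow 2
  have hdiv := hN.fun_div hD (by positivity)
  refine hdiv.congr_deriv ?_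
  set r := Real.sqrt (cc + 2 * cq * t + qq * t ^ 2) with hrdef
  have hsq : r ^ 2 = cc + 2 * cq * t + qq * t ^ 2 := Real.sq_sqrt hφpos.le
  have hrpos : 0 < r := Real.sqrt_pos.mpr hφpos
  have hDne : r - (xc + xq * t) ≠ 0 := ne_of_gt hDpos
  rw [← hsq]
  push_cast
  field_simp
  ring

lemma matsumotoG_formula (X Y P Q : V) (hX : ‖X‖ < 1 / 2) (hY : ⟪Y, Y⟫ = 1) :
    matsumotoG X Y P Q =
      ((2 * ⟪Y, P⟫ * (⟪Y, Q⟫ * (1 - 2 * ⟪X, Y⟫) + ⟪X, Q⟫) + ⟪P, Q⟫ * (1 - 2 * ⟪X, Y⟫)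
          + ⟪Y, Q⟫ * (⟪Y, P⟫ - 2 * ⟪X, P⟫) + 2 * ⟪Y, P⟫ * ⟪X, Q⟫) * (1 - ⟪X, Y⟫)
        - 3 * (⟪Y, Q⟫ * (1 - 2 * ⟪X, Y⟫) + ⟪X, Q⟫) * (⟪Y, P⟫ - ⟪X, P⟫))
        / (1 - ⟪X, Y⟫) ^ 4 := by
  set a := (⟪X, Y⟫ : ℝ) with hadef
  set p := (⟪Y, P⟫ : ℝ) with hpdef
  set q := (⟪Y, Q⟫ : ℝ) with hqdef
  set pq := (⟪P, Q⟫ : ℝ) with hpqdef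
  set pX := (⟪X, P⟫ : ℝ) with hpXdef
  set qX := (⟪X, Q⟫ : ℝ) with hqXdef
  set PP := (⟪P, P⟫ : ℝ) with hPPdef
  have hnY : ‖Y‖ = 1 := by
    have := matsumoto_sqrt_inner_self Y
    rw [hY, Real.sqrt_one] at this
    exact this.symm
  have hYne : Y ≠ 0 := by
    intro h; rw [h] at hnY; simp at hnY
  have haabs : |a| < 1 / 2 := by
    have := abs_real_inner_le_norm X Y
    rw [hnY, mul_one] at this
    exact lt_of_le_of_lt this hX
  have ha1 : (1 : ℝ) - a ≠ 0 := by
    have := abs_lt.mp haabs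
    intro h; linarith [this.2]
  set g : ℝ → ℝ := fun s =>
    2 * ((1 + 2 * p * s + PP * s ^ 2) *
      ((q + pq * s) * (Real.sqrt (1 + 2 * p * s + PP * s ^ 2) - 2 * (a + pX * s))
        + (1 + 2 * p * s + PP * s ^ 2) * qX)) /
      (Real.sqrt (1 + 2 * p * s + PP * s ^ 2) - (a + pX * s)) ^ 3 with hgdef
  have hev : ∀ᶠ s in nhds (0 : ℝ), Y + s • P ≠ 0 := by
    have hc : Continuous (fun s : ℝ => Y + s • P) := by continuity
    have hmem : {v : V | v ≠ 0} ∈ nhds (Y + (0 : ℝ) • P) := by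
      apply (isOpen_compl_singleton (x := (0:V))).mem_nhds
      simp [hYne]
    exact hc.continuousAt.preimage_mem_nhds hmem
  have hev2 : (fun s : ℝ => deriv (fun t : ℝ =>
      (matsumotoF X (Y + s • P + t • Q)) ^ 2) 0) =ᶠ[nhds 0] g := by
    filter_upwards [hev] with s hs
    have h := (matsumoto_hasDerivAt_inner_t X (Y + s • P) Q hX 0 (by simpa using hs)).deriv
    simp only [zero_smul, add_zero] at h
    rw [h]
    have e1 : (⟪Y + s • P, Y + s • P⟫ : ℝ) = 1 + 2 * p * s + PP * s ^ 2 := by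
      rw [matsumoto_inner_expand, hY]
    have e2 : (⟪X, Y + s • P⟫ : ℝ) = a + pX * s := by
      simp [inner_add_right, real_inner_smul_right, hadef, hpXdef]
      ring
    have e3 : (⟪Y + s • P, Q⟫ : ℝ) = q + pq * s := by
      simp [inner_add_left, real_inner_smul_left, hqdef, hpqdef, real_inner_comm P Q]
      ring
    rw [e1, e2, e3, hgdef]
    ring
  have hG : matsumotoG X Y P Q = (1 / 2) * deriv g 0 := by
    rw [matsumotoG, hev2.deriv_eq]
  have hφ' : HasDerivAt (fun s : ℝ => 1 + 2 * p * s + PP * s ^ 2) (2 * p + PP * (2 * 0)) 0 := by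
    have h2 : HasDerivAt (fun s : ℝ => 2 * p * s) (2 * p) 0 := by
      simpa using (hasDerivAt_id (0:ℝ)).const_mul (2 * p)
    have h3 : HasDerivAt (fun s : ℝ => PP * s ^ 2) (PP * (2 * 0)) 0 := by
      simpa using (hasDerivAt_pow 2 (0:ℝ)).const_mul PP
    simpa using ((hasDerivAt_const (0:ℝ) (1:ℝ)).fun_add h2).fun_add h3
  have hφ0 : (1 : ℝ) + 2 * p * 0 + PP * 0 ^ 2 ≠ 0 := by norm_num
  have hr := hφ'.sqrt hφ0
  have h2' : HasDerivAt (fun s : ℝ => a + pX * s) pX 0 := by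
    simpa using (hasDerivAt_const (0:ℝ) a).fun_add ((hasDerivAt_id (0:ℝ)).const_mul pX)
  have h3' : HasDerivAt (fun s : ℝ => q + pq * s) pq 0 := by
    simpa using (hasDerivAt_const (0:ℝ) q).fun_add ((hasDerivAt_id (0:ℝ)).const_mul pq)
  have hin1 := h3'.fun_mul (hr.fun_sub (h2'.const_mul 2))
  have hin2 := hφ'.mul_const qX
  have htop := (hφ'.fun_mul (hin1.fun_add hin2)).const_mul 2
  have hbot := (hr.fun_sub h2').fun_pow 3
  have hbot0 : ((Real.sqrt (1 + 2 * p * 0 + PP * 0 ^ 2) - (a + pX * 0)) ^ 3) ≠ 0 := by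
    norm_num [Real.sqrt_one]
    exact sub_ne_zero.mpr (fun h => ha1 (by linarith [h]))
  have hg' := (htop.fun_div hbot hbot0).deriv
  rw [hG, hg']
  norm_num [Real.sqrt_one]
  field_simp
  ring

end Aux

theorem matsumoto_flag_curvature_quotient
    {V : Type*} [NormedAddCommGroup V] [InnerProductSpace ℝ V] [FiniteDimensional ℝ V]
    (X : V) (hX : ‖X‖ < 1 / 2) (Y U W : V)
    (hY : ⟪Y, Y⟫ = 1) (hU : ⟪U, U⟫ = 1) (hYU : ⟪Y, U⟫ = 0)
    (hWY : ⟪W, Y⟫ = 0) (A B : ℝ) (hA : A = ⟪W, X⟫) (hB : B = ⟪W, U⟫) :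
    matsumotoG X Y W U /
        (matsumotoG X Y Y Y * matsumotoG X Y U U - matsumotoG X Y Y U ^ 2) =
      (1 - ⟪Y, X⟫) ^ 2 *
          (B * (1 - ⟪Y, X⟫) * (1 - 2 * ⟪Y, X⟫) + 3 * A * ⟪U, X⟫) /
        ((1 - ⟪Y, X⟫) * (1 - 2 * ⟪Y, X⟫) + 2 * ⟪U, X⟫ ^ 2) := by
  have hXY : (⟪X, Y⟫ : ℝ) = ⟪Y, X⟫ := (real_inner_comm X Y).symm
  have hXU : (⟪X, U⟫ : ℝ) = ⟪U, X⟫ := (real_inner_comm X U).symm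
  have hXW : (⟪X, W⟫ : ℝ) = A := by rw [real_inner_comm]; exact hA.symm
  have hYW : (⟪Y, W⟫ : ℝ) = 0 := by rw [real_inner_comm]; exact hWY
  have hWU : (⟪W, U⟫ : ℝ) = B := hB.symm
  set a := (⟪Y, X⟫ : ℝ) with hadef
  set u := (⟪U, X⟫ : ℝ) with hudef
  have hnY : ‖Y‖ = 1 := by
    have := matsumoto_sqrt_inner_self Y
    rw [hY, Real.sqrt_one] at this
    exact this.symm
  have haabs : |a| < 1 / 2 := by
    have h := abs_real_inner_le_norm X Y
    rw [hnY, mul_one] at h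
    rw [← hXY]
    exact lt_of_le_of_lt h hX
  have ha' := abs_lt.mp haabs
  have h1 : (0 : ℝ) < 1 - a := by linarith [ha'.2]
  have h2 : (0 : ℝ) < 1 - 2 * a := by linarith [ha'.2]
  have h3 : (0 : ℝ) < (1 - a) * (1 - 2 * a) + 2 * u ^ 2 := by nlinarith [sq_nonneg u]
  have gYY : matsumotoG X Y Y Y = 1 / (1 - a) ^ 2 := by
    rw [matsumotoG_formula X Y Y Y hX hY, hY, hXY]
    field_simp
    ring
  have gUU : matsumotoG X Y U U = ((1 - a) * (1 - 2 * a) + 3 * u ^ 2) / (1 - a) ^ 4 := by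
    rw [matsumotoG_formula X Y U U hX hY, hU, hYU, hXY, hXU]
    ring
  have gYU : matsumotoG X Y Y U = u / (1 - a) ^ 3 := by
    rw [matsumotoG_formula X Y Y U hX hY, hY, hYU, hXY, hXU]
    field_simp
    ring
  have gWU : matsumotoG X Y W U =
      (B * (1 - a) * (1 - 2 * a) + 3 * A * u) / (1 - a) ^ 4 := by
    rw [matsumotoG_formula X Y W U hX hY, hYU, hYW, hWU, hXY, hXU, hXW]
    ring
  rw [gYY, gUU, gYU, gWU]
  rw [div_eq_div_iff]
  · field_simp
    ring
  · have hne : (1 - a) ^ 6 ≠ 0 := by positivity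
    have : 1 / (1 - a) ^ 2 * (((1 - a) * (1 - 2 * a) + 3 * u ^ 2) / (1 - a) ^ 4)
        - (u / (1 - a) ^ 3) ^ 2 = ((1 - a) * (1 - 2 * a) + 2 * u ^ 2) / (1 - a) ^ 6 := by
      field_simp
      ring
    rw [this]
    positivity
  · positivity
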